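/- Let A be an abelian category. Suppose given morphisms u : X ⟶ Y, v : Y ⟶ Z, y : Y ⟶ Y', z : Z ⟶ Z', u' : Y' ⟶ Z', v' : Z' ⟶ W' with v ≫ z = y ≫ u', u ≫ y = 0 and z ≫ v' = 0. If the pair (u ≫ v, z) is exact at Z and the pair (y, u' ≫ v') is exact at Y', then the quadrangle (v, y, z, u') is a weak square. -/
import Mathlib


open CategoryTheory CategoryTheory.Limits

/-- A commutative quadrangle `(f, g, h, k)` (with `f ≫ h = g ≫ k`) in an abelian category is a
*weak square* if its diagonal sequence `A ⟶ B ⊞ C ⟶ D`, with first morphism `biprod.lift f g`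
and second morphism `biprod.desc h (-k)`, is exact at `B ⊞ C`. -/
def IsWeakSquare {A : Type*} [Category A] [Abelian A] {W X Y Z : A}
    (f : W ⟶ X) (g : W ⟶ Y) (h : X ⟶ Z) (k : Y ⟶ Z) : Prop :=
  ∃ w : biprod.lift f g ≫ biprod.desc h (-k) = 0,
    (ShortComplex.mk (biprod.lift f g) (biprod.desc h (-k)) w).Exact

/-- If `(u ≫ v, z)` is exact at `Z` and `(y, u' ≫ v')` is exact at `Y'`, then the quadrangle
`(v, y, z, u')` is a weak square. -/
theorem isWeakSquare_of_exact_outer {A : Type*} [Category A] [Abelian A]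
    {X Y Z Y' Z' W' : A}
    (u : X ⟶ Y) (v : Y ⟶ Z) (y : Y ⟶ Y') (z : Z ⟶ Z') (u' : Y' ⟶ Z') (v' : Z' ⟶ W')
    (comm : v ≫ z = y ≫ u') (hu : u ≫ y = 0) (hz : z ≫ v' = 0)
    (h₁ : (ShortComplex.mk (u ≫ v) z
        (by rw [Category.assoc, comm, ← Category.assoc, hu, zero_comp])).Exact)
    (h₂ : (ShortComplex.mk y (u' ≫ v')
        (by rw [← Category.assoc, ← comm, Category.assoc, hz, comp_zero])).Exact) :
    IsWeakSquare v y z u' := by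
  have w : biprod.lift v y ≫ biprod.desc z (-u') = 0 := by
    rw [biprod.lift_desc, Preadditive.comp_neg, comm, add_neg_cancel]
  refine ⟨w, ?_⟩
  rw [ShortComplex.exact_iff_exact_up_to_refinements]
  intro T t ht
  dsimp at t ht ⊢
  have hbc : (t ≫ biprod.fst) ≫ z = (t ≫ biprod.snd) ≫ u' := by
    rw [← sub_eq_zero, sub_eq_add_neg, ← Preadditive.comp_neg]
    have ht' : t = biprod.lift (t ≫ biprod.fst) (t ≫ biprod.snd) := by
      ext <;> simp
    rw [ht'] at ht
    simpa only [biprod.lift_desc, Category.assoc] using ht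
  obtain ⟨T', π, hπ, y₁, hy₁⟩ := h₂.exact_up_to_refinements (t ≫ biprod.snd) (by
    dsimp
    have e := hbc =≫ v'
    simp only [Category.assoc, hz, comp_zero] at e
    simpa only [Category.assoc] using e.symm)
  dsimp at y₁ hy₁
  obtain ⟨T'', π', hπ', x, hx⟩ := h₁.exact_up_to_refinements
    (π ≫ t ≫ biprod.fst - y₁ ≫ v) (by
      dsimp
      rw [Preadditive.sub_comp, sub_eq_zero]
      have e1 := π ≫= hbc
      have e2 := hy₁ =≫ u'
      have e3 := y₁ ≫= comm.symm
      simp only [Category.assoc] at e1 e2 e3 ⊢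
      rw [e1, e2, e3])
  dsimp at x hx
  simp only [Category.assoc, Preadditive.comp_sub] at hx
  refine ⟨T'', π' ≫ π, epi_comp _ _, π' ≫ y₁ + x ≫ u, biprod.hom_ext _ _ ?_ ?_⟩
  · simp only [Category.assoc, biprod.lift_fst, Preadditive.add_comp]
    rw [← hx]
    abel
  · simp only [Category.assoc, biprod.lift_snd, Preadditive.add_comp, hu, comp_zero, add_zero]
    have e := π' ≫= hy₁
    simpa only [Category.assoc] using e
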